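/- arXiv:2110.12690 — 3 statements merged into one kernel-verified Lean document; each statement's English description precedes it below -/
import Mathlib

section
/- Let F : ℝᵈ → ℝᵈ be twice continuously differentiable such that the Jacobian ∇F(x) is skew-symmetric for every x. Then F is affine: there exists a skew-symmetric matrix A and a vector b such that F(x) = A x + b for all x. -/
open scoped RealInnerProductSpace

/-- A C² map whose Jacobian is everywhere skew-symmetric is affine with
skew-symmetric linear part. -/
theorem stmt_3 (d : ℕ) (F : EuclideanSpace ℝ (Fin d) → EuclideanSpace ℝ (Fin d))
    (hF : ContDiff ℝ 2 F)
    (hskew : ∀ x v w, ⟪fderiv ℝ F x v, w⟫ = - ⟪v, fderiv ℝ F x w⟫) :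
    ∃ A : EuclideanSpace ℝ (Fin d) →L[ℝ] EuclideanSpace ℝ (Fin d),
      (∀ v w, ⟪A v, w⟫ = - ⟪v, A w⟫) ∧
      ∃ b : EuclideanSpace ℝ (Fin d), ∀ x, F x = A x + b := by
  have hB : Differentiable ℝ (fderiv ℝ F) :=
    (hF.fderiv_right (m := 1) (by norm_num)).differentiable (by norm_num)
  have hFd : Differentiable ℝ F := hF.differentiable (by norm_num)
  set B := fderiv ℝ F with hBdef
  -- The second derivative vanishes everywhere
  have hS0 : ∀ x, fderiv ℝ B x = 0 := by
    intro x
    set S := fderiv ℝ B x with hSdef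
    have hsymm : ∀ u v : EuclideanSpace ℝ (Fin d), S u v = S v u := by
      intro u v
      exact second_derivative_symmetric (fun y => (hFd y).hasFDerivAt)
        ((hB x).hasFDerivAt) u v
    have hskewS : ∀ u v w : EuclideanSpace ℝ (Fin d), ⟪S u v, w⟫ = - ⟪v, S u w⟫ := by
      intro u v w
      -- differentiate the skew relation
      set φ : (EuclideanSpace ℝ (Fin d) →L[ℝ] EuclideanSpace ℝ (Fin d)) →L[ℝ] ℝ :=
        ((innerSL ℝ w).comp (ContinuousLinearMap.apply ℝ (EuclideanSpace ℝ (Fin d)) v)) +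
          ((innerSL ℝ v).comp (ContinuousLinearMap.apply ℝ (EuclideanSpace ℝ (Fin d)) w)) with hφ
      have h1 : HasFDerivAt (fun y => φ (B y)) (φ.comp S) x :=
        φ.hasFDerivAt.comp x (hB x).hasFDerivAt
      have h2 : (fun y => φ (B y)) = fun _ => (0 : ℝ) := by
        funext y
        have := hskew y v w
        simp only [hφ, ContinuousLinearMap.add_apply, ContinuousLinearMap.comp_apply,
          ContinuousLinearMap.apply_apply, innerSL_apply_apply]
        linarith [real_inner_comm w (B y v), this]
      rw [h2] at h1
      have h3 : φ.comp S = 0 := ((hasFDerivAt_const (0 : ℝ) x).unique h1).symm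
      have h4 : φ (S u) = 0 := by
        rw [← ContinuousLinearMap.comp_apply, h3]; rfl
      simp only [hφ, ContinuousLinearMap.add_apply, ContinuousLinearMap.comp_apply,
        ContinuousLinearMap.apply_apply, innerSL_apply_apply] at h4
      linarith [real_inner_comm w (S u v), h4]
    have hT : ∀ u v w : EuclideanSpace ℝ (Fin d), ⟪S u v, w⟫ = 0 := by
      intro u v w
      have e1 : ⟪S u v, w⟫ = ⟪S v u, w⟫ := by rw [hsymm]
      have e2 : ⟪S v u, w⟫ = - ⟪S v w, u⟫ := by rw [hskewS, real_inner_comm]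
      have e3 : ⟪S v w, u⟫ = ⟪S w v, u⟫ := by rw [hsymm]
      have e4 : ⟪S w v, u⟫ = - ⟪S w u, v⟫ := by rw [hskewS, real_inner_comm]
      have e5 : ⟪S w u, v⟫ = ⟪S u w, v⟫ := by rw [hsymm]
      have e6 : ⟪S u w, v⟫ = - ⟪S u v, w⟫ := by rw [hskewS, real_inner_comm]
      linarith
    ext u v : 2
    exact (inner_self_eq_zero (𝕜 := ℝ)).mp (hT u v (S u v))
  -- hence the derivative is constant
  have hconst : ∀ x, B x = B 0 := fun x =>
    is_const_of_fderiv_eq_zero hB hS0 x 0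
  refine ⟨B 0, fun v w => hskew 0 v w, F 0, fun x => ?_⟩
  have hG : ∀ y, HasFDerivAt (fun z => F z - (B 0) z)
      (0 : EuclideanSpace ℝ (Fin d) →L[ℝ] EuclideanSpace ℝ (Fin d)) y := by
    intro y
    have h1 : HasFDerivAt F (B 0) y := by
      rw [← hconst y]; exact (hFd y).hasFDerivAt
    have h2 := h1.sub ((B 0).hasFDerivAt (x := y)); rwa [sub_self] at h2
  have : (fun z => F z - (B 0) z) x = (fun z => F z - (B 0) z) 0 :=
    is_const_of_fderiv_eq_zero (𝕜 := ℝ) (fun y => (hG y).differentiableAt)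
      (fun y => (hG y).fderiv) x 0
  simp only [map_zero, sub_zero] at this
  rw [sub_eq_iff_eq_add] at this
  rw [this, add_comm]
end

section
/- Let f : ℝᵈ → ℝ be a convex differentiable function whose gradient is Lipschitz with constant L. Then for all x, z ∈ ℝᵈ: (1/L)‖∇f(x) - ∇f(z)‖₂² ≤ ⟨x - z, ∇f(x) - ∇f(z)⟩ (co-coercivity of the gradient). -/
open scoped RealInnerProductSpace

section Aux

variable {d : ℕ}

private lemma aux_hasDerivAt (f : EuclideanSpace ℝ (Fin d) → ℝ)
    (hdiff : Differentiable ℝ f) (p v : EuclideanSpace ℝ (Fin d)) (t : ℝ) :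
    HasDerivAt (fun s : ℝ => f (p + s • v)) ⟪gradient f (p + t • v), v⟫ t := by
  have h1 : HasDerivAt (fun s : ℝ => p + s • v) v t := by
    simpa using ((hasDerivAt_id t).smul_const v).const_add p
  have h2 : HasFDerivAt f (InnerProductSpace.toDual ℝ _ (gradient f (p + t • v)))
      (p + t • v) := (hdiff _).hasGradientAt.hasFDerivAt
  have h3 := h2.comp_hasDerivAt t h1
  rw [InnerProductSpace.toDual_apply_apply] at h3
  exact h3

/-- First-order condition for convexity. -/
private lemma aux_first_order (f : EuclideanSpace ℝ (Fin d) → ℝ)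
    (hconv : ConvexOn ℝ Set.univ f) (hdiff : Differentiable ℝ f)
    (x y : EuclideanSpace ℝ (Fin d)) :
    f x + ⟪gradient f x, y - x⟫ ≤ f y := by
  set g : ℝ → ℝ := fun s => f (x + s • (y - x)) with hg
  have hline : (f ∘ (AffineMap.lineMap x y : ℝ →ᵃ[ℝ] _)) = g := by
    funext s
    simp [hg, AffineMap.lineMap_apply, vsub_eq_sub, vadd_eq_add, add_comm]
  have hgconv : ConvexOn ℝ Set.univ g := by
    have := hconv.comp_affineMap (AffineMap.lineMap x y : ℝ →ᵃ[ℝ] _)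
    rwa [hline, Set.preimage_univ] at this
  have hder : HasDerivAt g ⟪gradient f x, y - x⟫ 0 := by
    simpa using aux_hasDerivAt f hdiff x (y - x) 0
  have := hgconv.le_slope_of_hasDerivAt (Set.mem_univ (0 : ℝ)) (Set.mem_univ (1 : ℝ))
    zero_lt_one hder
  have hslope : slope g 0 1 = f y - f x := by
    simp [slope_def_field, hg, div_one]
  rw [hslope] at this
  linarith

/-- Descent lemma. -/
private lemma aux_descent (f : EuclideanSpace ℝ (Fin d) → ℝ) (L : ℝ)
    (hdiff : Differentiable ℝ f)
    (hsmooth : ∀ x z, ‖gradient f x - gradient f z‖ ≤ L * ‖x - z‖)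
    (x y : EuclideanSpace ℝ (Fin d)) :
    f y ≤ f x + ⟪gradient f x, y - x⟫ + L / 2 * ‖y - x‖ ^ 2 := by
  set v := y - x with hv
  set c : ℝ := ⟪gradient f x, v⟫ with hc
  set K : ℝ := L / 2 * ‖v‖ ^ 2 with hK
  set φ : ℝ → ℝ := fun t => f (x + t • v) - t * c - K * t ^ 2 with hφ
  have hφder : ∀ t : ℝ, HasDerivAt φ
      (⟪gradient f (x + t • v), v⟫ - c - K * (2 * t)) t := by
    intro t
    have h1 := aux_hasDerivAt f hdiff x v t
    have h2 : HasDerivAt (fun t : ℝ => t * c) c t := by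
      simpa using (hasDerivAt_id t).mul_const c
    have h3 : HasDerivAt (fun t : ℝ => K * t ^ 2) (K * (2 * t)) t := by
      simpa using ((hasDerivAt_pow 2 t).const_mul K)
    exact (h1.sub h2).sub h3
  have hanti : AntitoneOn φ (Set.Icc (0 : ℝ) 1) := by
    apply antitoneOn_of_deriv_nonpos (convex_Icc 0 1)
      (fun t _ => ((hφder t).differentiableAt).continuousAt.continuousWithinAt)
      (fun t ht => ((hφder t).differentiableAt).differentiableWithinAt)
      (fun t ht => ?_)
    rw [interior_Icc] at ht
    rw [(hφder t).deriv]
    have hb : ⟪gradient f (x + t • v), v⟫ - c ≤ L * t * ‖v‖ ^ 2 := by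
      have h1 : ⟪gradient f (x + t • v), v⟫ - c
          = ⟪gradient f (x + t • v) - gradient f x, v⟫ := by
        rw [hc, inner_sub_left]
      have h2 : ⟪gradient f (x + t • v) - gradient f x, v⟫
          ≤ ‖gradient f (x + t • v) - gradient f x‖ * ‖v‖ := real_inner_le_norm _ _
      have h3 : ‖gradient f (x + t • v) - gradient f x‖ ≤ L * (t * ‖v‖) := by
        have := hsmooth (x + t • v) x
        simpa [norm_smul, abs_of_pos ht.1] using this
      have hvnonneg : (0 : ℝ) ≤ ‖v‖ := norm_nonneg _
      calc ⟪gradient f (x + t • v), v⟫ - c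
          ≤ ‖gradient f (x + t • v) - gradient f x‖ * ‖v‖ := by rw [h1]; exact h2
        _ ≤ L * (t * ‖v‖) * ‖v‖ := by
            exact mul_le_mul_of_nonneg_right h3 hvnonneg
        _ = L * t * ‖v‖ ^ 2 := by ring
    have : K * (2 * t) = L * t * ‖v‖ ^ 2 := by rw [hK]; ring
    linarith
  have h01 := hanti (Set.mem_Icc.2 ⟨le_refl 0, zero_le_one⟩)
    (Set.mem_Icc.2 ⟨zero_le_one, le_refl 1⟩) zero_le_one
  have hφ0 : φ 0 = f x := by simp [hφ]
  have hφ1 : φ 1 = f y - c - K := by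
    have hx1 : x + (1:ℝ) • v = y := by rw [one_smul, hv]; abel
    show f (x + (1:ℝ) • v) - 1 * c - K * 1 ^ 2 = f y - c - K
    rw [hx1]; ring
  rw [hφ0, hφ1] at h01
  rw [hc, hK] at h01
  linarith

/-- One-sided key inequality. -/
private lemma aux_key (f : EuclideanSpace ℝ (Fin d) → ℝ) (L : ℝ) (hL : 0 < L)
    (hconv : ConvexOn ℝ Set.univ f) (hdiff : Differentiable ℝ f)
    (hsmooth : ∀ x z, ‖gradient f x - gradient f z‖ ≤ L * ‖x - z‖)
    (x z : EuclideanSpace ℝ (Fin d)) :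
    f x + ⟪gradient f x, z - x⟫ + 1 / (2 * L) * ‖gradient f z - gradient f x‖ ^ 2
      ≤ f z := by
  set gx := gradient f x
  set gz := gradient f z
  set w : EuclideanSpace ℝ (Fin d) := z - (1 / L) • (gz - gx) with hw
  have hdesc := aux_descent f L hdiff hsmooth z w
  have hfo := aux_first_order f hconv hdiff x w
  have hwz : w - z = -((1 / L) • (gz - gx)) := by rw [hw]; abel
  have e1 : ⟪gz, w - z⟫ = -(1 / L) * ⟪gz, gz - gx⟫ := by
    rw [hwz, inner_neg_right, real_inner_smul_right]; ring
  have e2 : ‖w - z‖ ^ 2 = (1 / L) ^ 2 * ‖gz - gx‖ ^ 2 := by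
    rw [hwz, norm_neg, norm_smul, Real.norm_eq_abs,
      abs_of_pos (by positivity : (0:ℝ) < 1 / L)]
    ring
  have e3 : ⟪gx, w - x⟫ = ⟪gx, z - x⟫ - (1 / L) * ⟪gx, gz - gx⟫ := by
    have : w - x = (z - x) - (1 / L) • (gz - gx) := by rw [hw]; abel
    rw [this, inner_sub_right, real_inner_smul_right]
  have e4 : ⟪gz, gz - gx⟫ - ⟪gx, gz - gx⟫ = ‖gz - gx‖ ^ 2 := by
    rw [← inner_sub_left, real_inner_self_eq_norm_sq]
  rw [e1, e2] at hdesc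
  rw [e3] at hfo
  have hLne : L ≠ 0 := ne_of_gt hL
  have expand : f x + ⟪gx, z - x⟫ - (1 / L) * ⟪gx, gz - gx⟫
      ≤ f z + -(1 / L) * ⟪gz, gz - gx⟫ + L / 2 * ((1 / L) ^ 2 * ‖gz - gx‖ ^ 2) := by
    linarith [hfo, hdesc]
  have hsq : L / 2 * ((1 / L) ^ 2 * ‖gz - gx‖ ^ 2) = 1 / (2 * L) * ‖gz - gx‖ ^ 2 := by
    field_simp
  rw [hsq] at expand
  have hinner : (1 / L) * ⟪gz, gz - gx⟫ - (1 / L) * ⟪gx, gz - gx⟫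
      = (1 / L) * ‖gz - gx‖ ^ 2 := by rw [← mul_sub, e4]
  have h2L : (1 / L) * ‖gz - gx‖ ^ 2 - 1 / (2 * L) * ‖gz - gx‖ ^ 2
      = 1 / (2 * L) * ‖gz - gx‖ ^ 2 := by field_simp; ring
  nlinarith [expand, hinner, h2L]

end Aux

/-- Co-coercivity of the gradient of a convex `L`-smooth function. -/
theorem stmt_5 (d : ℕ) (f : EuclideanSpace ℝ (Fin d) → ℝ) (L : ℝ)
    (hconv : ConvexOn ℝ Set.univ f) (hdiff : Differentiable ℝ f)
    (hsmooth : ∀ x z, ‖gradient f x - gradient f z‖ ≤ L * ‖x - z‖) :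
    ∀ x z : EuclideanSpace ℝ (Fin d),
      (1 / L) * ‖gradient f x - gradient f z‖ ^ 2 ≤
        ⟪x - z, gradient f x - gradient f z⟫ := by
  intro x z
  by_cases hg : gradient f x = gradient f z
  · simp [hg]
  · have hL : 0 < L := by
      by_contra hL
      push_neg at hL
      have h1 := hsmooth x z
      have h2 : 0 < ‖gradient f x - gradient f z‖ := by
        rw [norm_pos_iff]; exact sub_ne_zero.2 hg
      nlinarith [norm_nonneg (x - z)]
    have k1 := aux_key f L hL hconv hdiff hsmooth x z
    have k2 := aux_key f L hL hconv hdiff hsmooth z x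
    have e1 : ⟪gradient f x, z - x⟫ + ⟪gradient f z, x - z⟫
        = -⟪x - z, gradient f x - gradient f z⟫ := by
      simp only [inner_sub_left, inner_sub_right]
      rw [real_inner_comm x (gradient f x), real_inner_comm x (gradient f z),
        real_inner_comm z (gradient f x), real_inner_comm z (gradient f z)]
      ring
    have e2 : ‖gradient f z - gradient f x‖ = ‖gradient f x - gradient f z‖ :=
      norm_sub_rev _ _
    rw [e2] at k1
    have sum := add_le_add k1 k2
    have h2L : 1 / (2 * L) * ‖gradient f x - gradient f z‖ ^ 2
        + 1 / (2 * L) * ‖gradient f x - gradient f z‖ ^ 2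
        = (1 / L) * ‖gradient f x - gradient f z‖ ^ 2 := by
      field_simp; ring
    nlinarith [sum, e1, h2L]
end

section
/- Let W ∈ ℝ^{k×d}, b ∈ ℝᵏ, and σ : ℝ → ℝ non-decreasing and 1-Lipschitz (applied entrywise). Then the Convex Potential Layer map x ↦ x - (2/‖W‖₂²) Wᵀσ(Wx + b) is 1-Lipschitz with respect to the Euclidean norm (assuming W ≠ 0). -/
open Matrix

section Aux

variable {d k : ℕ} (W : Matrix (Fin k) (Fin d) ℝ)

lemma cpl_adjoint_inner (u : EuclideanSpace ℝ (Fin k)) (v : EuclideanSpace ℝ (Fin d)) :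
    inner ℝ (Matrix.toEuclideanLin Wᵀ u) v
      = (inner ℝ u (Matrix.toEuclideanLin W v) : ℝ) := by
  simp only [PiLp.inner_apply, RCLike.inner_apply, starRingEnd_apply, star_trivial,
    Matrix.toEuclideanLin_apply, PiLp.toLp_apply,
    Matrix.mulVec, dotProduct, Matrix.transpose_apply, Finset.sum_mul, Finset.mul_sum]
  rw [Finset.sum_comm]
  congr 1; ext i; congr 1; ext j; ring

lemma cpl_transpose_norm_le (u : EuclideanSpace ℝ (Fin k)) :
    ‖Matrix.toEuclideanLin Wᵀ u‖
      ≤ ‖LinearMap.toContinuousLinearMap (Matrix.toEuclideanLin W)‖ * ‖u‖ := by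
  set A := LinearMap.toContinuousLinearMap (Matrix.toEuclideanLin W)
  set T := Matrix.toEuclideanLin Wᵀ
  have hAcoe : ∀ v, A v = Matrix.toEuclideanLin W v := fun v => rfl
  have hsq : ‖T u‖ ^ 2 = inner ℝ u (A (T u)) := by
    rw [← real_inner_self_eq_norm_sq, hAcoe]
    exact cpl_adjoint_inner W u (T u)
  have h2 : (inner ℝ u (A (T u)) : ℝ) ≤ ‖u‖ * (‖A‖ * ‖T u‖) :=
    (real_inner_le_norm u (A (T u))).trans
      (by gcongr; exact A.le_opNorm _)
  rcases eq_or_lt_of_le (norm_nonneg (T u)) with h0 | h0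
  · rw [← h0]; positivity
  · have := hsq ▸ h2
    nlinarith [norm_nonneg u]

lemma cpl_scalar_ineq (σ : ℝ → ℝ) (hmono : Monotone σ) (hσ : LipschitzWith 1 σ)
    (p q : ℝ) : (σ p - σ q) ^ 2 ≤ (σ p - σ q) * (p - q) := by
  have habs : |σ p - σ q| ≤ |p - q| := by
    have := hσ.dist_le_mul p q
    simpa [Real.dist_eq] using this
  rcases le_total q p with hpq | hpq
  · have h1 : 0 ≤ σ p - σ q := by have := hmono hpq; linarith
    have h2 : σ p - σ q ≤ p - q := by
      rw [abs_of_nonneg h1, abs_of_nonneg (by linarith : (0:ℝ) ≤ p - q)] at habs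
      exact habs
    nlinarith
  · have h1 : σ p - σ q ≤ 0 := by have := hmono hpq; linarith
    have h2 : p - q ≤ σ p - σ q := by
      rw [abs_of_nonpos h1, abs_of_nonpos (by linarith : p - q ≤ (0:ℝ))] at habs
      linarith
    nlinarith

end Aux

/-- The Convex Potential Layer is `1`-Lipschitz. -/
theorem stmt_14 (d k : ℕ) (W : Matrix (Fin k) (Fin d) ℝ) (hW : W ≠ 0)
    (b : Fin k → ℝ) (σ : ℝ → ℝ) (hmono : Monotone σ) (hσ : LipschitzWith 1 σ) :
    ∀ x z : EuclideanSpace ℝ (Fin d),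
      ‖(x - (2 / ‖LinearMap.toContinuousLinearMap (Matrix.toEuclideanLin W)‖ ^ 2) •
            Matrix.toEuclideanLin Wᵀ (WithLp.toLp 2 (fun i => σ (Matrix.toEuclideanLin W x i + b i)))) -
        (z - (2 / ‖LinearMap.toContinuousLinearMap (Matrix.toEuclideanLin W)‖ ^ 2) •
            Matrix.toEuclideanLin Wᵀ (WithLp.toLp 2 (fun i => σ (Matrix.toEuclideanLin W z i + b i))))‖ ≤
      ‖x - z‖ := by
  intro x z
  set A := LinearMap.toContinuousLinearMap (Matrix.toEuclideanLin W) with hA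
  have hL : 0 < ‖A‖ := by
    rw [norm_pos_iff]
    intro h0
    apply hW
    have h1 : Matrix.toEuclideanLin W = 0 :=
      (map_eq_zero_iff _ LinearMap.toContinuousLinearMap.injective).mp h0
    simpa using (map_eq_zero_iff _ (Matrix.toEuclideanLin (𝕜 := ℝ)).injective).mp h1
  set h : ℝ := 2 / ‖A‖ ^ 2 with hh
  set wx : EuclideanSpace ℝ (Fin k) := WithLp.toLp 2 (fun i => σ (Matrix.toEuclideanLin W x i + b i)) with hwx
  set wz : EuclideanSpace ℝ (Fin k) := WithLp.toLp 2 (fun i => σ (Matrix.toEuclideanLin W z i + b i)) with hwz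
  set w : EuclideanSpace ℝ (Fin k) := wx - wz with hw
  have hTw : Matrix.toEuclideanLin Wᵀ wx - Matrix.toEuclideanLin Wᵀ wz
      = Matrix.toEuclideanLin Wᵀ w := by rw [hw, map_sub]
  have key : (x - h • Matrix.toEuclideanLin Wᵀ wx) - (z - h • Matrix.toEuclideanLin Wᵀ wz)
      = (x - z) - h • Matrix.toEuclideanLin Wᵀ w := by
    rw [← hTw, smul_sub]; abel
  rw [key]
  -- inner product lower bound : ⟪x - z, Wᵀ w⟫ = ⟪W(x-z), w⟫ ≥ ‖w‖²
  have hinner : (‖w‖ : ℝ) ^ 2 ≤ inner ℝ (x - z) (Matrix.toEuclideanLin Wᵀ w) := by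
    rw [real_inner_comm, cpl_adjoint_inner]
    have hnormsq : ‖w‖ ^ 2 = ∑ i, w i ^ 2 := by
      rw [← real_inner_self_eq_norm_sq, PiLp.inner_apply]
      simp [sq]
    rw [PiLp.inner_apply, hnormsq]
    apply Finset.sum_le_sum
    intro i _
    have hwi : w i = σ (Matrix.toEuclideanLin W x i + b i)
        - σ (Matrix.toEuclideanLin W z i + b i) := by
      rw [hw]; simp [hwx, hwz]
    have hWi : (Matrix.toEuclideanLin W (x - z)) i
        = (Matrix.toEuclideanLin W x i + b i) - (Matrix.toEuclideanLin W z i + b i) := by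
      rw [map_sub]
      simp only [PiLp.sub_apply]
      ring
    rw [RCLike.inner_apply, starRingEnd_apply, star_trivial, hwi, hWi]
    exact cpl_scalar_ineq σ hmono hσ _ _ |>.trans_eq (mul_comm _ _)
  -- norm of Wᵀ w
  have hTnorm : ‖Matrix.toEuclideanLin Wᵀ w‖ ≤ ‖A‖ * ‖w‖ := cpl_transpose_norm_le W w
  -- expand the squared norm
  have expand : ‖(x - z) - h • Matrix.toEuclideanLin Wᵀ w‖ ^ 2
      = ‖x - z‖ ^ 2 - 2 * h * inner ℝ (x - z) (Matrix.toEuclideanLin Wᵀ w)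
        + h ^ 2 * ‖Matrix.toEuclideanLin Wᵀ w‖ ^ 2 := by
    rw [norm_sub_sq_real, real_inner_smul_right, norm_smul, mul_pow]
    have hhn : ‖h‖ = h := abs_of_nonneg (by positivity)
    rw [Real.norm_eq_abs] at hhn ⊢
    rw [hhn]
    ring
  have hfinal : ‖(x - z) - h • Matrix.toEuclideanLin Wᵀ w‖ ^ 2 ≤ ‖x - z‖ ^ 2 := by
    rw [expand]
    have hh2 : h ^ 2 * ‖Matrix.toEuclideanLin Wᵀ w‖ ^ 2 ≤ h ^ 2 * (‖A‖ * ‖w‖) ^ 2 := by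
      gcongr
    have hcancel : h ^ 2 * (‖A‖ * ‖w‖) ^ 2 = 2 * h * ‖w‖ ^ 2 := by
      have hL' : ‖A‖ ≠ 0 := ne_of_gt hL
      rw [hh]
      field_simp
    have h2w : 2 * h * ‖w‖ ^ 2 ≤ 2 * h * inner ℝ (x - z) (Matrix.toEuclideanLin Wᵀ w) := by
      gcongr
    linarith
  calc ‖(x - z) - h • Matrix.toEuclideanLin Wᵀ w‖
      = Real.sqrt (‖(x - z) - h • Matrix.toEuclideanLin Wᵀ w‖ ^ 2) := by
        rw [Real.sqrt_sq (norm_nonneg _)]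
    _ ≤ Real.sqrt (‖x - z‖ ^ 2) := Real.sqrt_le_sqrt hfinal
    _ = ‖x - z‖ := Real.sqrt_sq (norm_nonneg _)
end
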